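/- Let ρ be a probabilistic choice function and let π be a probability distribution over choice types that represents ρ and satisfies π(⊴ s) = min_{i∈{1,…,n}} P_i(s_i) for every choice type s. Then the support of π is a chain under the componentwise order: for all s, s' ∈ supp(π), either s ⊴ s' or s' ⊴ s (i.e., the min-copula assigns positive weight only to a progressive (comonotone) set of choice types). -/
import Mathlib


open Finset

variable {n : ℕ} {S : Fin n → Type*} [∀ i, Fintype (S i)] [∀ i, LinearOrder (S i)]

/-- `ρ` is a probabilistic choice function: each `ρ i` is a probability distribution on `S i`. -/
def IsPCF (ρ : ∀ i, S i → ℝ) : Prop :=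
  (∀ i (x : S i), 0 ≤ ρ i x) ∧ ∀ i, ∑ x : S i, ρ i x = 1

/-- The cumulative choice function `P_i(x) = ∑_{y ≤ x} ρ_i(y)`. -/
noncomputable def cumul (ρ : ∀ i, S i → ℝ) (i : Fin n) (x : S i) : ℝ :=
  ∑ y ∈ Finset.univ.filter (fun y => y ≤ x), ρ i y

/-- `π` is a probability distribution over choice types. -/
def IsDist (π : (∀ i, S i) → ℝ) : Prop :=
  (∀ s, 0 ≤ π s) ∧ ∑ s : ∀ i, S i, π s = 1

/-- `π` represents `ρ`: the marginals of `π` agree with `ρ`. -/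
def Represents (π : (∀ i, S i) → ℝ) (ρ : ∀ i, S i → ℝ) : Prop :=
  ∀ i (x : S i), ∑ s ∈ Finset.univ.filter (fun s : ∀ i, S i => s i = x), π s = ρ i x

/-- `π(⊴ s)`: total mass on choice types componentwise below `s`. -/
noncomputable def cdfLe (π : (∀ i, S i) → ℝ) (s : ∀ i, S i) : ℝ :=
  ∑ t ∈ Finset.univ.filter (fun t : ∀ i, S i => ∀ i, t i ≤ s i), π t

lemma cumul_mono {ρ : ∀ i, S i → ℝ} (hρ : ∀ i (x : S i), 0 ≤ ρ i x)
    (i : Fin n) {a b : S i} (hab : a ≤ b) : cumul ρ i a ≤ cumul ρ i b := by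
  apply Finset.sum_le_sum_of_subset_of_nonneg
  · intro y hy
    simp only [Finset.mem_filter, Finset.mem_univ, true_and] at *
    exact le_trans hy hab
  · intro y _ _; exact hρ i y

lemma cdfLe_add_le {π : (∀ i, S i) → ℝ} (hpos : ∀ t, 0 ≤ π t)
    (m s : ∀ i, S i) (hms : ∀ i, m i ≤ s i) (j : Fin n) (hj : m j < s j) :
    cdfLe π m + π s ≤ cdfLe π s := by
  have hnot : s ∉ Finset.univ.filter (fun t : ∀ i, S i => ∀ i, t i ≤ m i) := by
    simp only [Finset.mem_filter, Finset.mem_univ, true_and]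
    intro h
    exact absurd (h j) (not_le.mpr hj)
  have := Finset.sum_insert (s := Finset.univ.filter (fun t : ∀ i, S i => ∀ i, t i ≤ m i))
    (f := π) hnot
  have hsub : insert s (Finset.univ.filter (fun t : ∀ i, S i => ∀ i, t i ≤ m i)) ⊆
      Finset.univ.filter (fun t : ∀ i, S i => ∀ i, t i ≤ s i) := by
    intro t ht
    simp only [Finset.mem_insert, Finset.mem_filter, Finset.mem_univ, true_and] at *
    rcases ht with rfl | ht
    · exact fun i => le_refl _
    · exact fun i => le_trans (ht i) (hms i)
  calc cdfLe π m + π s = ∑ t ∈ insert s (Finset.univ.filter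
        (fun t : ∀ i, S i => ∀ i, t i ≤ m i)), π t := by
        rw [this, add_comm]; rfl
    _ ≤ cdfLe π s := Finset.sum_le_sum_of_subset_of_nonneg hsub (fun t _ _ => hpos t)

/-- the min-copula representation has a chain (progressive/comonotone) support. -/
theorem min_copula_support_chain (hn : 0 < n) [∀ i, Nonempty (S i)]
    (ρ : ∀ i, S i → ℝ) (hρ : IsPCF ρ)
    (π : (∀ i, S i) → ℝ) (hdist : IsDist π) (hrep : Represents π ρ)
    (hcdf : ∀ s : ∀ i, S i, cdfLe π s = ⨅ i, cumul ρ i (s i)) :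
    ∀ s s' : ∀ i, S i, 0 < π s → 0 < π s' →
      (∀ i, s i ≤ s' i) ∨ (∀ i, s' i ≤ s i) := by
  haveI : Nonempty (Fin n) := ⟨⟨0, hn⟩⟩
  intro s s' hs hs'
  by_contra h
  push_neg at h
  obtain ⟨⟨i₀, hi₀⟩, ⟨j₀, hj₀⟩⟩ := h
  set m : ∀ i, S i := fun i => min (s i) (s' i) with hm
  have hms : ∀ i, m i ≤ s i := fun i => min_le_left _ _
  have hms' : ∀ i, m i ≤ s' i := fun i => min_le_right _ _
  -- lower bound on cdfLe π m
  have hbdd : ∀ t : ∀ i, S i, BddBelow (Set.range fun i => cumul ρ i (t i)) :=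
    fun t => (Set.finite_range _).bddBelow
  have hkey : min (cdfLe π s) (cdfLe π s') ≤ cdfLe π m := by
    rw [hcdf m]
    apply le_ciInf
    intro i
    rcases le_total (s i) (s' i) with hle | hle
    · have : m i = s i := min_eq_left hle
      rw [this]
      refine le_trans (min_le_left _ _) ?_
      rw [hcdf s]
      exact ciInf_le (hbdd s) i
    · have : m i = s' i := min_eq_right hle
      rw [this]
      refine le_trans (min_le_right _ _) ?_
      rw [hcdf s']
      exact ciInf_le (hbdd s') i
  rcases le_total (cdfLe π s) (cdfLe π s') with hle | hle
  · have h1 : cdfLe π s ≤ cdfLe π m := le_trans (le_of_eq (min_eq_left hle).symm) hkey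
    have hj : m i₀ < s i₀ := lt_of_le_of_lt (min_le_right _ _) hi₀
    have := cdfLe_add_le hdist.1 m s hms i₀ hj
    linarith
  · have h1 : cdfLe π s' ≤ cdfLe π m := le_trans (le_of_eq (min_eq_right hle).symm) hkey
    have hj : m j₀ < s' j₀ := lt_of_le_of_lt (min_le_left _ _) hj₀
    have := cdfLe_add_le hdist.1 m s' hms' j₀ hj
    linarith
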